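/- Let (W,S) be a Coxeter system with Coxeter matrix m, let i ≠ j with m(i,j) = m finite, and consider the alternating words u = s_i s_j s_i ⋯ (m letters) and v = s_j s_i s_j ⋯ (m letters). Then for all 1 ≤ n ≤ m, the n-th reflection of u equals the (m−n+1)-st reflection of v: r_n(u) = r_{m−n+1}(v) in W. -/

import Mathlib

section AbstractDihedral

variable {G : Type*} [Group G]

private lemma aux_conj (x y : G) (hx : x * x = 1) (hy : y * y = 1) :
    ∀ z : ℤ, y * (x * y) ^ z = (x * y) ^ (-z) * y := by
  intro z
  have hy' : y⁻¹ = y := inv_eq_of_mul_eq_one_right hy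
  have hx' : x⁻¹ = x := inv_eq_of_mul_eq_one_right hx
  have h1 : y * (x * y) * y⁻¹ = (x * y)⁻¹ := by
    rw [hy', mul_inv_rev, hx', hy', mul_assoc y, mul_assoc x, hy, mul_one]
  calc y * (x * y) ^ z = (y * (x * y) * y⁻¹) ^ z * y := by rw [conj_zpow]; group
    _ = ((x * y)⁻¹) ^ z * y := by rw [h1]
    _ = (x * y) ^ (-z) * y := by rw [inv_zpow, ← zpow_neg]

private lemma aux_hyx (x y : G) (hx : x * x = 1) (hy : y * y = 1) :
    (x * y) ^ (-1 : ℤ) * x = y := by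
  have hy' : y⁻¹ = y := inv_eq_of_mul_eq_one_right hy
  have hx' : x⁻¹ = x := inv_eq_of_mul_eq_one_right hx
  rw [zpow_neg, zpow_one, mul_inv_rev, hy', hx', mul_assoc, hx, mul_one]

private lemma aux_main (x y : G) (hx : x * x = 1) (hy : y * y = 1) (a : ℕ) :
    ((if Even a then 1 else y) * (x * y) ^ (a / 2))⁻¹ *
      ((if Even (a + 1) then 1 else y) * (x * y) ^ ((a + 1) / 2)) =
      (x * y) ^ (-(a : ℤ) - 1) * x := by
  have hy' : y⁻¹ = y := inv_eq_of_mul_eq_one_right hy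
  have hc := aux_conj x y hx hy
  have hyx := aux_hyx x y hx hy
  rcases Nat.even_or_odd a with he | ho
  · obtain ⟨c, hc2⟩ := he
    have h1 : ¬ Even (a + 1) := by simp [Nat.even_add_one, hc2]
    have h2 : a / 2 = c := by omega
    have h3 : (a + 1) / 2 = c := by omega
    rw [if_pos ⟨c, hc2⟩, if_neg h1, h2, h3, one_mul]
    set t := x * y with ht
    rw [← zpow_natCast t c, ← zpow_neg, hc, ← hyx]
    simp only [← mul_assoc, ← zpow_add]
    rw [show (-(c : ℤ) + (-(c : ℤ) + -1)) = -(a : ℤ) - 1 by omega]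
  · obtain ⟨c, hc2⟩ := ho
    have h1 : ¬ Even a := by simp [hc2, parity_simps]
    have h2 : Even (a + 1) := by simpa [Nat.even_add_one] using h1
    have h3 : a / 2 = c := by omega
    have h4 : (a + 1) / 2 = c + 1 := by omega
    rw [if_neg h1, if_pos h2, h3, h4, one_mul]
    set t := x * y with ht
    rw [mul_inv_rev, hy', ← zpow_natCast t c, ← zpow_natCast t (c + 1),
      ← zpow_neg, mul_assoc, hc, ← hyx]
    simp only [← mul_assoc, ← zpow_add]
    rw [show (-(c : ℤ) + (-((c + 1 : ℕ) : ℤ) + -1)) = -(a : ℤ) - 1 by push_cast; omega]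

private lemma aux_key (x y : G) (hx : x * x = 1) (hy : y * y = 1) (m : ℕ)
    (hm : (x * y) ^ m = 1) (a r : ℕ) (h : a + r + 1 = m) :
    ((if Even a then 1 else y) * (x * y) ^ (a / 2))⁻¹ *
      ((if Even (a + 1) then 1 else y) * (x * y) ^ ((a + 1) / 2)) =
    ((if Even r then 1 else x) * (y * x) ^ (r / 2))⁻¹ *
      ((if Even (r + 1) then 1 else x) * (y * x) ^ ((r + 1) / 2)) := by
  have hy' : y⁻¹ = y := inv_eq_of_mul_eq_one_right hy
  have hx' : x⁻¹ = x := inv_eq_of_mul_eq_one_right hx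
  rw [aux_main x y hx hy a, aux_main y x hy hx r]
  have hu : y * x = (x * y)⁻¹ := by rw [mul_inv_rev, hx', hy']
  have hyx := aux_hyx x y hx hy
  rw [hu]
  set t := x * y with ht
  rw [inv_zpow, ← zpow_neg, ← hyx, ← mul_assoc, ← zpow_add]
  have hmz : t ^ (m : ℤ) = 1 := by rw [ht, zpow_natCast, hm]
  rw [show (-(a : ℤ) - 1) = (-(-(r : ℤ) - 1) + -1) - m by omega, zpow_sub, hmz]
  simp

end AbstractDihedral

section CoxeterAux

variable {B W : Type*} [Group W] {M : CoxeterMatrix B} (cs : CoxeterSystem M W)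

private lemma drop_alternatingWord (i j : B) : ∀ (m k : ℕ),
    (CoxeterSystem.alternatingWord i j m).drop k =
      CoxeterSystem.alternatingWord i j (m - k) := by
  intro m
  induction m with
  | zero => intro k; simp [CoxeterSystem.alternatingWord]
  | succ m ih =>
    intro k
    cases k with
    | zero => simp
    | succ k =>
      rw [CoxeterSystem.alternatingWord_succ', List.drop_succ_cons, ih k,
        Nat.succ_sub_succ]

private lemma getD_leftInvSeq_eq_drop (ω : List B) (k : ℕ) (h : k < ω.length) :
    (cs.leftInvSeq ω).getD k 1 =
      cs.wordProd ω * (cs.wordProd (ω.drop (k + 1)))⁻¹ *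
        cs.wordProd (ω.drop k) * (cs.wordProd ω)⁻¹ := by
  rw [cs.getD_leftInvSeq]
  have ht : cs.wordProd (ω.take k) = cs.wordProd ω * (cs.wordProd (ω.drop k))⁻¹ := by
    have h2 := cs.wordProd_append (ω.take k) (ω.drop k)
    rw [List.take_append_drop] at h2
    rw [h2]; group
  have hg : (Option.map cs.simple ω[k]?).getD 1 = cs.simple ω[k] := by
    rw [List.getElem?_eq_getElem h]; rfl
  have hπ : cs.wordProd (ω.drop k) = cs.simple ω[k] * cs.wordProd (ω.drop (k + 1)) := by
    conv_lhs => rw [List.drop_eq_getElem_cons h]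
    exact cs.wordProd_cons _ _
  rw [hg, ht, hπ]
  group

end CoxeterAux

/-- Let `i ≠ j` with `m = M i j` finite, and let `u`, `v` be the two alternating words of
length `m` in `s_i, s_j` (one starting with each letter).  Then for `1 ≤ n ≤ m`, the `n`-th
reflection of `u` equals the `(m - n + 1)`-st reflection of `v`. -/
theorem leftInvSeq_alternatingWord_symm {B W : Type*} [Group W] {M : CoxeterMatrix B}
    (cs : CoxeterSystem M W) (i j : B) (hij : i ≠ j) (hfin : M i j ≠ 0) :
    ∀ n, 1 ≤ n → n ≤ M i j →
      (cs.leftInvSeq (CoxeterSystem.alternatingWord i j (M i j))).getD (n - 1) 1 =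
      (cs.leftInvSeq (CoxeterSystem.alternatingWord j i (M i j))).getD (M i j - n) 1 := by
  intro n h1 hn
  have hk1 : n - 1 < (CoxeterSystem.alternatingWord i j (M i j)).length := by
    rw [CoxeterSystem.length_alternatingWord]; omega
  have hk2 : M i j - n < (CoxeterSystem.alternatingWord j i (M i j)).length := by
    rw [CoxeterSystem.length_alternatingWord]; omega
  rw [getD_leftInvSeq_eq_drop cs _ _ hk1, getD_leftInvSeq_eq_drop cs _ _ hk2,
    drop_alternatingWord, drop_alternatingWord, drop_alternatingWord, drop_alternatingWord]
  rw [show M i j - (n - 1 + 1) = M i j - n by omega,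
    show M i j - (n - 1) = M i j - n + 1 by omega,
    show M i j - (M i j - n + 1) = n - 1 by omega,
    show M i j - (M i j - n) = n - 1 + 1 by omega]
  have hbraid : cs.wordProd (CoxeterSystem.alternatingWord i j (M i j)) =
      cs.wordProd (CoxeterSystem.alternatingWord j i (M i j)) := by
    have h2 := cs.wordProd_braidWord_eq i j
    rwa [CoxeterSystem.braidWord, CoxeterSystem.braidWord, M.symmetric j i] at h2
  have key : (cs.wordProd (CoxeterSystem.alternatingWord i j (M i j - n)))⁻¹ *
      cs.wordProd (CoxeterSystem.alternatingWord i j (M i j - n + 1)) =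
      (cs.wordProd (CoxeterSystem.alternatingWord j i (n - 1)))⁻¹ *
      cs.wordProd (CoxeterSystem.alternatingWord j i (n - 1 + 1)) := by
    rw [cs.prod_alternatingWord_eq_mul_pow, cs.prod_alternatingWord_eq_mul_pow,
      cs.prod_alternatingWord_eq_mul_pow, cs.prod_alternatingWord_eq_mul_pow]
    exact aux_key (cs.simple i) (cs.simple j) (cs.simple_mul_simple_self i)
      (cs.simple_mul_simple_self j) (M i j) (cs.simple_mul_simple_pow i j)
      (M i j - n) (n - 1) (by omega)
  rw [hbraid]
  have h3 := congrArg (fun w => cs.wordProd (CoxeterSystem.alternatingWord j i (M i j)) * w *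
    (cs.wordProd (CoxeterSystem.alternatingWord j i (M i j)))⁻¹) key
  simpa only [mul_assoc] using h3
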